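/- Let n ≥ 2 and let G and G̃ be n×n positive definite complex Hermitian matrices. Then the Hermitian matrix tr(G̃⁻¹G)·G⁻¹ − G̃⁻¹ is positive definite. (This is the pointwise statement that the tensor Θ^{ij̄} = (1/(n−1))((tr_{g̃} g) g^{ij̄} − g̃^{ij̄}) appearing in the paper is a positive definite Hermitian form.) -/

import Mathlib

open Matrix ComplexOrder

private lemma posDef_conj_of_isUnit {n : ℕ} {A B : Matrix (Fin n) (Fin n) ℂ}
    (hA : A.PosDef) (hB : IsUnit B) : (Bᴴ * A * B).PosDef := by
  refine PosDef.of_dotProduct_mulVec_pos ?_ ?_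
  · exact isHermitian_conjTranspose_mul_mul B hA.1
  · intro x hx
    have hBx : B *ᵥ x ≠ 0 := by
      intro h
      exact hx <| (Matrix.mulVec_injective_iff_isUnit.mpr hB) (by simpa [mulVec_zero] using h)
    simpa only [star_mulVec, dotProduct_mulVec, vecMul_vecMul] using hA.dotProduct_mulVec_pos hBx

private lemma trace_smul_one_sub_posDef {n : ℕ} (hn : 2 ≤ n)
    {B : Matrix (Fin n) (Fin n) ℂ} (hB : B.PosDef) :
    (B.trace • (1 : Matrix (Fin n) (Fin n) ℂ) - B).PosDef := by
  have hH := hB.isHermitian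
  set U : Matrix (Fin n) (Fin n) ℂ := (hH.eigenvectorUnitary : Matrix (Fin n) (Fin n) ℂ) with hU
  have hUU : U * star U = 1 := (Matrix.mem_unitaryGroup_iff).mp hH.eigenvectorUnitary.2
  have hUU' : star U * U = 1 := (Matrix.mem_unitaryGroup_iff').mp hH.eigenvectorUnitary.2
  have hspec : B = U * diagonal (RCLike.ofReal ∘ hH.eigenvalues) * star U :=
    hH.spectral_theorem
  have htr : B.trace = ∑ i, (hH.eigenvalues i : ℂ) := by
    conv_lhs => rw [hspec]
    rw [trace_mul_cycle, hUU', one_mul, trace_diagonal]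
    rfl
  set s : ℝ := ∑ i, hH.eigenvalues i with hs
  have htr' : B.trace = (s : ℂ) := by rw [htr, hs]; push_cast; rfl
  have hpos : ∀ i, 0 < s - hH.eigenvalues i := by
    intro i
    have he : ∑ j ∈ Finset.univ.erase i, hH.eigenvalues j = s - hH.eigenvalues i :=
      Finset.sum_erase_eq_sub (Finset.mem_univ i)
    rw [← he]
    apply Finset.sum_pos (fun j _ => hB.eigenvalues_pos j)
    rw [← Finset.card_pos, Finset.card_erase_of_mem (Finset.mem_univ i), Finset.card_univ]
    simp only [Fintype.card_fin]; omega
  have heq : B.trace • (1 : Matrix (Fin n) (Fin n) ℂ) - B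
      = U * diagonal (fun i => ((s - hH.eigenvalues i : ℝ) : ℂ)) * star U := by
    have h1 : B.trace • (1 : Matrix (Fin n) (Fin n) ℂ)
        = U * diagonal (fun _ => (s : ℂ)) * star U := by
      have : diagonal (fun _ : Fin n => (s : ℂ)) = (s : ℂ) • 1 := by
        ext i j
        by_cases h : i = j <;> simp [Matrix.diagonal_apply, Matrix.one_apply, h]
      rw [this, htr']
      simp only [Matrix.mul_smul, Matrix.smul_mul, mul_one, hUU]
    have hdd : (diagonal fun _ : Fin n => (s : ℂ)) - diagonal (RCLike.ofReal ∘ hH.eigenvalues)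
        = diagonal (fun i => ((s - hH.eigenvalues i : ℝ) : ℂ)) := by
      rw [Matrix.diagonal_sub]
      congr 1 with i
      push_cast
      rfl
    conv_lhs => rw [h1, hspec]
    rw [← Matrix.sub_mul, ← Matrix.mul_sub, hdd]
  rw [heq]
  have hd : (diagonal (fun i => ((s - hH.eigenvalues i : ℝ) : ℂ))).PosDef :=
    Matrix.PosDef.diagonal fun i => by exact_mod_cast Complex.zero_lt_real.mpr (hpos i)
  have hUsu : IsUnit (star U) := ⟨⟨star U, U, hUU', hUU⟩, rfl⟩
  have := posDef_conj_of_isUnit (B := star U) hd hUsu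
  simpa only [Matrix.star_eq_conjTranspose, conjTranspose_conjTranspose] using this

/-- The tensor `Θ^{ij̄} = (1/(n−1))((tr_{g̃} g) g^{ij̄} − g̃^{ij̄})` is positive definite:
if `G` and `G̃` are positive definite Hermitian matrices (with `n ≥ 2`), then
`tr(G̃⁻¹G)·G⁻¹ − G̃⁻¹` is positive definite. -/
theorem trace_smul_inv_sub_inv_posDef {n : ℕ} (hn : 2 ≤ n)
    (G Gt : Matrix (Fin n) (Fin n) ℂ)
    (hG : G.PosDef) (hGt : Gt.PosDef) :
    ((Gt⁻¹ * G).trace • G⁻¹ - Gt⁻¹).PosDef := by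
  have hGs := hG.posSemidef
  set S := (open scoped MatrixOrder in CFC.sqrt G) with hSdef
  have hSS : S * S = G := by
    open scoped MatrixOrder in exact CFC.sqrt_mul_sqrt_self G hGs.nonneg
  have hSH : S.IsHermitian := by
    open scoped MatrixOrder in exact (Matrix.nonneg_iff_posSemidef.mp (CFC.sqrt_nonneg G)).1
  have hSu : IsUnit S := by
    have h2 : S.det * S.det ≠ 0 := by
      rw [← Matrix.det_mul, hSS]; exact hG.det_pos.ne'
    exact (Matrix.isUnit_iff_isUnit_det S).mpr (isUnit_iff_ne_zero.mpr (mul_self_ne_zero.mp h2))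
  have hSinvH : S⁻¹.IsHermitian := hSH.inv
  have hB : (S * Gt⁻¹ * S).PosDef := by
    have := posDef_conj_of_isUnit hGt.inv hSu
    rwa [hSH.eq] at this
  have htr : (S * Gt⁻¹ * S).trace = (Gt⁻¹ * G).trace := by
    rw [trace_mul_cycle, hSS, trace_mul_comm]
  have hkey := trace_smul_one_sub_posDef hn hB
  have := posDef_conj_of_isUnit hkey ((Matrix.isUnit_nonsing_inv_iff).mpr hSu)
  rw [hSinvH.eq] at this
  have heq : S⁻¹ * ((S * Gt⁻¹ * S).trace • (1 : Matrix (Fin n) (Fin n) ℂ) - S * Gt⁻¹ * S) * S⁻¹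
      = (Gt⁻¹ * G).trace • G⁻¹ - Gt⁻¹ := by
    rw [Matrix.mul_sub, Matrix.sub_mul]
    congr 1
    · rw [htr, Matrix.mul_smul, Matrix.smul_mul, mul_one, ← Matrix.mul_inv_rev, hSS]
    · have hdet : IsUnit S.det := (Matrix.isUnit_iff_isUnit_det S).mp hSu
      rw [mul_assoc (S⁻¹) _ (S⁻¹), mul_assoc (S * Gt⁻¹) S S⁻¹,
        Matrix.mul_nonsing_inv S hdet, mul_one, ← mul_assoc,
        Matrix.nonsing_inv_mul S hdet, one_mul]
  rwa [heq] at this
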